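/- Let K = ℚ^cycl be the maximal cyclotomic extension of ℚ, k = K(a, b, c) the rational function field in three variables over K, and L = k(√a). Set ε₀ = ε₁ = abc, ε₂ = ac(b−1)(a−bc), ε₃ = abc(1−b)(a−b²c), ε₄ = b(b²c−a)(bc−a). Then ε₀·ε₁ = (abc)² is a square in L, while for every pair of indices i < j in {0,1,2,3,4} with {i,j} ≠ {0,1}, the product εᵢ·εⱼ is not a square in L. -/

import Mathlib

noncomputable section
set_option maxHeartbeats 1000000
set_option synthInstance.maxHeartbeats 400000

/-- The rational function field `K(a, b, c)` in three variables over `K`. -/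
abbrev RatFunc3 (K : Type) [Field K] : Type := FractionRing (MvPolynomial (Fin 3) K)

/-- The variable `a`. -/
def va (K : Type) [Field K] : RatFunc3 K :=
  algebraMap (MvPolynomial (Fin 3) K) (RatFunc3 K) (MvPolynomial.X 0)

/-- The variable `b`. -/
def vb (K : Type) [Field K] : RatFunc3 K :=
  algebraMap (MvPolynomial (Fin 3) K) (RatFunc3 K) (MvPolynomial.X 1)

/-- The variable `c`. -/
def vc (K : Type) [Field K] : RatFunc3 K :=
  algebraMap (MvPolynomial (Fin 3) K) (RatFunc3 K) (MvPolynomial.X 2)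

/-- `ε₂ = ac(b−1)(a−bc)`. -/
def eps2 (K : Type) [Field K] : RatFunc3 K :=
  va K * vc K * (vb K - 1) * (va K - vb K * vc K)

/-- `ε₃ = abc(1−b)(a−b²c)`. -/
def eps3 (K : Type) [Field K] : RatFunc3 K :=
  va K * vb K * vc K * (1 - vb K) * (va K - vb K ^ 2 * vc K)

/-- `ε₄ = b(b²c−a)(bc−a)`. -/
def eps4 (K : Type) [Field K] : RatFunc3 K :=
  vb K * (vb K ^ 2 * vc K - va K) * (vb K * vc K - va K)

/-- The five discriminants `ε₀ = ε₁ = abc`, `ε₂`, `ε₃`, `ε₄` of the degeneracy locus. -/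
def epsFam (K : Type) [Field K] : Fin 5 → RatFunc3 K :=
  ![va K * vb K * vc K, va K * vb K * vc K, eps2 K, eps3 K, eps4 K]

open MvPolynomial

/-- Shorthand for the polynomial ring in three variables. -/
abbrev Rr (K : Type) [Field K] := MvPolynomial (Fin 3) K

section Aux

variable {K : Type} [Field K]

lemma myPrime_X_sub_C (i : Fin 3) (r : K) : Prime (X i - C r : Rr K) := by
  let e : Rr K ≃+* Polynomial (MvPolynomial (Fin 2) K) :=
    (renameEquiv K (Equiv.swap i 0)).toRingEquiv.trans (finSuccEquiv K 2).toRingEquiv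
  refine (MulEquiv.prime_iff e.toMulEquiv).mp ?_
  show Prime (e (X i - C r))
  have h : e (X i - C r) = Polynomial.X - Polynomial.C (C r) := by
    simp [e, map_sub, renameEquiv_apply, rename_X, rename_C, Equiv.swap_apply_left,
      finSuccEquiv_X_zero, finSuccEquiv_apply]
  rw [h]
  exact Polynomial.prime_X_sub_C _

lemma myPrime_X (i : Fin 3) : Prime (X i : Rr K) := by
  simpa using myPrime_X_sub_C i (0 : K)

lemma my_not_dvd (π Q : Rr K) (v : Fin 3 → K) (h0 : eval v π = 0) (h1 : eval v Q ≠ 0) :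
    ¬ π ∣ Q := by
  rintro ⟨r, rfl⟩
  rw [map_mul, h0, zero_mul] at h1
  exact h1 rfl

lemma my_not_sq (π Q : Rr K) (hπ : Prime π) (h : ¬ π ∣ Q) : ¬ IsSquare (π * Q) := by
  rintro ⟨m, hm⟩
  have h2 : π ∣ m := hπ.dvd_of_dvd_pow (n := 2) (by rw [sq, ← hm]; exact Dvd.intro Q rfl)
  obtain ⟨m', rfl⟩ := h2
  apply h
  have hcancel : Q = π * (m' * m') := mul_left_cancel₀ hπ.ne_zero (by rw [hm]; ring)
  exact ⟨m' * m', hcancel⟩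

lemma my_not_sq_frac (n : Rr K) (h : ¬ IsSquare n) :
    ¬ IsSquare (algebraMap (Rr K) (RatFunc3 K) n) := by
  rintro ⟨y, hy⟩
  have hint : IsIntegral (Rr K) y :=
    ⟨Polynomial.X ^ 2 - Polynomial.C n, Polynomial.monic_X_pow_sub_C n two_ne_zero, by
      simp [sq, ← hy]⟩
  obtain ⟨m, hm⟩ := IsIntegrallyClosed.isIntegral_iff.mp hint
  apply h
  refine ⟨m, IsFractionRing.injective (Rr K) (RatFunc3 K) ?_⟩
  rw [map_mul, hm, ← hy]

lemma va_eq : va K = algebraMap (Rr K) (RatFunc3 K) (X 0) := rfl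

lemma va_not_sq : ¬ IsSquare (va K) := by
  rw [va_eq]
  apply my_not_sq_frac
  have := my_not_sq (X 0 : Rr K) 1 (myPrime_X 0) (myPrime_X 0).not_dvd_one
  rwa [mul_one] at this

lemma quad_nonsq [CharZero K] {L : Type} [Field L] [Algebra (RatFunc3 K) L] (s : L)
    (hs : s ^ 2 = algebraMap (RatFunc3 K) L (va K))
    (hrank : Module.finrank (RatFunc3 K) L = 2) (x : RatFunc3 K)
    (h1 : ¬ IsSquare x) (h2 : ¬ IsSquare (va K * x)) :
    ¬ IsSquare (algebraMap (RatFunc3 K) L x) := by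
  haveI : CharZero (Rr K) := charZero_of_injective_algebraMap (C_injective (Fin 3) K)
  haveI : CharZero (RatFunc3 K) :=
    charZero_of_injective_algebraMap (IsFractionRing.injective (Rr K) (RatFunc3 K))
  have hinj : Function.Injective (algebraMap (RatFunc3 K) L) := (algebraMap (RatFunc3 K) L).injective
  have hsnot : ∀ w : RatFunc3 K, s ≠ algebraMap (RatFunc3 K) L w := by
    intro w hw
    apply va_not_sq (K := K)
    refine ⟨w, hinj ?_⟩
    rw [← hs, hw, map_mul, sq]
  have li : LinearIndependent (RatFunc3 K) ![(1 : L), s] := by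
    rw [LinearIndependent.pair_iff]
    intro u v huv
    rw [Algebra.smul_def, Algebra.smul_def, mul_one] at huv
    by_cases hv : v = 0
    · subst hv
      rw [map_zero, zero_mul, add_zero] at huv
      exact ⟨hinj (by simpa using huv), rfl⟩
    · exfalso
      have hv' : algebraMap (RatFunc3 K) L v ≠ 0 := fun h => hv (hinj (by simpa using h))
      refine hsnot (-u / v) ?_
      rw [map_div₀, map_neg, eq_div_iff hv']
      linear_combination huv
  rintro ⟨t, ht⟩
  let B := basisOfLinearIndependentOfCardEqFinrank li (by simp [hrank])
  have hB : ⇑B = ![(1 : L), s] := coe_basisOfLinearIndependentOfCardEqFinrank li _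
  have hrepr := B.sum_repr t
  rw [Fin.sum_univ_two] at hrepr
  set u := B.repr t 0 with hu
  set v := B.repr t 1 with hvdef
  have ht'' : t = algebraMap (RatFunc3 K) L u + algebraMap (RatFunc3 K) L v * s := by
    rw [← hrepr, hB]
    simp [Algebra.smul_def]
  have hx2 : algebraMap (RatFunc3 K) L x =
      (algebraMap (RatFunc3 K) L u + algebraMap (RatFunc3 K) L v * s) *
      (algebraMap (RatFunc3 K) L u + algebraMap (RatFunc3 K) L v * s) := by
    rw [ht, ← ht'']
  have key : (x - (u * u + va K * (v * v))) • (1 : L) + (-(2 * (u * v))) • s = 0 := by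
    simp only [Algebra.smul_def, mul_one, map_sub, map_add, map_mul, map_neg, map_ofNat]
    linear_combination hx2 + algebraMap (RatFunc3 K) L v * algebraMap (RatFunc3 K) L v * hs
  obtain ⟨hc1, hc2⟩ := LinearIndependent.pair_iff.mp li _ _ key
  have huv0 : u * v = 0 := by
    have := neg_eq_zero.mp hc2
    exact (mul_eq_zero.mp this).resolve_left two_ne_zero
  have hc1' : x = u * u + va K * (v * v) := sub_eq_zero.mp hc1
  rcases mul_eq_zero.mp huv0 with hu0 | hv0
  · apply h2
    rw [hc1', hu0]
    exact ⟨va K * v, by ring⟩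
  · apply h1
    rw [hc1', hv0]
    exact ⟨u, by ring⟩

lemma master_nonsq [CharZero K] {L : Type} [Field L] [Algebra (RatFunc3 K) L] (s : L)
    (hs : s ^ 2 = algebraMap (RatFunc3 K) L (va K))
    (hrank : Module.finrank (RatFunc3 K) L = 2) (x : RatFunc3 K) (π Q : Rr K)
    (hx : x = algebraMap (Rr K) (RatFunc3 K) (π * Q)) (hπ : Prime π)
    (v : Fin 3 → K) (h0 : eval v π = 0) (hQ : eval v Q ≠ 0) (hA : eval v (X 0) ≠ 0) :
    ¬ IsSquare (algebraMap (RatFunc3 K) L x) := by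
  apply quad_nonsq s hs hrank
  · rw [hx]
    exact my_not_sq_frac _ (my_not_sq π Q hπ (my_not_dvd π Q v h0 hQ))
  · have hxa : va K * x = algebraMap (Rr K) (RatFunc3 K) (π * (X 0 * Q)) := by
      rw [hx, va_eq, ← map_mul]
      congr 1
      ring
    rw [hxa]
    refine my_not_sq_frac _ (my_not_sq π _ hπ (my_not_dvd π _ v h0 ?_))
    rw [map_mul]
    exact mul_ne_zero hA hQ

end Aux

/-- Over `L = k(√a)` with `k = ℚ^cycl(a, b, c)`: `ε₀·ε₁ = (abc)²` is a square in `L`,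
while `εᵢ·εⱼ` is a nonsquare in `L` for every pair `i < j` with `{i,j} ≠ {0,1}`.
(Hence `{T₀, T₁}` is the only degree-2 subscheme of the degeneracy locus satisfying
condition (*) over `L`.) -/
theorem only_T0_T1_satisfies_star (K : Type) [Field K] [Algebra ℚ K]
    [IsCyclotomicExtension Set.univ ℚ K]
    (L : Type) [Field L] [Algebra (RatFunc3 K) L] (s : L)
    (hs : s ^ 2 = algebraMap (RatFunc3 K) L (va K))
    (hrank : Module.finrank (RatFunc3 K) L = 2) :
    (epsFam K 0 * epsFam K 1 = (va K * vb K * vc K) ^ 2) ∧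
    IsSquare (algebraMap (RatFunc3 K) L (epsFam K 0 * epsFam K 1)) ∧
    (∀ i j : Fin 5, i < j → ¬(i = 0 ∧ j = 1) →
      ¬ IsSquare (algebraMap (RatFunc3 K) L (epsFam K i * epsFam K j))) := by
  haveI : CharZero K := charZero_of_injective_algebraMap (algebraMap ℚ K).injective
  have e01 : epsFam K 0 * epsFam K 1 = (va K * vb K * vc K) ^ 2 := by
    simp only [epsFam, Matrix.cons_val_zero, Matrix.cons_val_one, Matrix.head_cons]
    ring
  have e0 : epsFam K 0 = algebraMap (Rr K) (RatFunc3 K) (X 0 * X 1 * X 2) := by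
    simp [epsFam, va, vb, vc, map_mul]
  have e1 : epsFam K 1 = algebraMap (Rr K) (RatFunc3 K) (X 0 * X 1 * X 2) := by
    simp [epsFam, va, vb, vc, map_mul]
  have e2' : epsFam K 2 = algebraMap (Rr K) (RatFunc3 K)
      (X 0 * X 2 * (X 1 - 1) * (X 0 - X 1 * X 2)) := by
    simp [epsFam, eps2, va, vb, vc, map_mul, map_sub, map_one]
  have e3' : epsFam K 3 = algebraMap (Rr K) (RatFunc3 K)
      (X 0 * X 1 * X 2 * (1 - X 1) * (X 0 - X 1 ^ 2 * X 2)) := by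
    simp [epsFam, eps3, va, vb, vc, map_mul, map_sub, map_one, map_pow]
  have e4' : epsFam K 4 = algebraMap (Rr K) (RatFunc3 K)
      (X 1 * (X 1 ^ 2 * X 2 - X 0) * (X 1 * X 2 - X 0)) := by
    simp [epsFam, eps4, va, vb, vc, map_mul, map_sub, map_one, map_pow]
  have pb : Prime (X 1 : Rr K) := myPrime_X 1
  have pc : Prime (X 2 : Rr K) := myPrime_X 2
  have pb1 : Prime (X 1 - 1 : Rr K) := by
    have := myPrime_X_sub_C (K := K) 1 1
    rwa [map_one] at this
  refine ⟨e01, ⟨algebraMap (RatFunc3 K) L (va K * vb K * vc K), by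
    rw [e01, ← map_mul, sq]⟩, ?_⟩
  intro i j hij hne
  fin_cases i <;> fin_cases j <;>
    first
      | exact absurd hij (by decide)
      | exact absurd (by decide) hne
      | skip
  -- remaining 9 goals
  · -- (0,2)
    refine master_nonsq s hs hrank _ (X 1)
      (X 0 ^ 2 * X 2 ^ 2 * (X 1 - 1) * (X 0 - X 1 * X 2))
      (by show epsFam K 0 * epsFam K 2 = _; rw [e0, e2', ← map_mul]; congr 1; ring) pb ![1, 0, 1] (by simp) (by norm_num [Matrix.cons_val_two]) (by simp)
  · -- (0,3)
    refine master_nonsq s hs hrank _ (X 1 - 1)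
      (-(X 0 ^ 2 * X 1 ^ 2 * X 2 ^ 2 * (X 0 - X 1 ^ 2 * X 2)))
      (by show epsFam K 0 * epsFam K 3 = _; rw [e0, e3', ← map_mul]; congr 1; ring) pb1 ![2, 1, 1] (by simp) (by norm_num [Matrix.cons_val_two]) (by simp)
  · -- (0,4)
    refine master_nonsq s hs hrank _ (X 2)
      (X 0 * X 1 ^ 2 * (X 1 ^ 2 * X 2 - X 0) * (X 1 * X 2 - X 0))
      (by show epsFam K 0 * epsFam K 4 = _; rw [e0, e4', ← map_mul]; congr 1; ring) pc ![1, 1, 0] (by simp) (by norm_num [Matrix.cons_val_two]) (by simp)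
  · -- (1,2)
    refine master_nonsq s hs hrank _ (X 1)
      (X 0 ^ 2 * X 2 ^ 2 * (X 1 - 1) * (X 0 - X 1 * X 2))
      (by show epsFam K 1 * epsFam K 2 = _; rw [e1, e2', ← map_mul]; congr 1; ring) pb ![1, 0, 1] (by simp) (by norm_num [Matrix.cons_val_two]) (by simp)
  · -- (1,3)
    refine master_nonsq s hs hrank _ (X 1 - 1)
      (-(X 0 ^ 2 * X 1 ^ 2 * X 2 ^ 2 * (X 0 - X 1 ^ 2 * X 2)))
      (by show epsFam K 1 * epsFam K 3 = _; rw [e1, e3', ← map_mul]; congr 1; ring) pb1 ![2, 1, 1] (by simp) (by norm_num [Matrix.cons_val_two]) (by simp)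
  · -- (1,4)
    refine master_nonsq s hs hrank _ (X 2)
      (X 0 * X 1 ^ 2 * (X 1 ^ 2 * X 2 - X 0) * (X 1 * X 2 - X 0))
      (by show epsFam K 1 * epsFam K 4 = _; rw [e1, e4', ← map_mul]; congr 1; ring) pc ![1, 1, 0] (by simp) (by norm_num [Matrix.cons_val_two]) (by simp)
  · -- (2,3)
    refine master_nonsq s hs hrank _ (X 1)
      (X 0 ^ 2 * X 2 ^ 2 * (X 1 - 1) * (1 - X 1) * (X 0 - X 1 * X 2) * (X 0 - X 1 ^ 2 * X 2))
      (by show epsFam K 2 * epsFam K 3 = _; rw [e2', e3', ← map_mul]; congr 1; ring) pb ![1, 0, 1] (by simp) (by norm_num [Matrix.cons_val_two]) (by simp)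
  · -- (2,4)
    refine master_nonsq s hs hrank _ (X 1)
      (X 0 * X 2 * (X 1 - 1) * (X 0 - X 1 * X 2) * (X 1 ^ 2 * X 2 - X 0) * (X 1 * X 2 - X 0))
      (by show epsFam K 2 * epsFam K 4 = _; rw [e2', e4', ← map_mul]; congr 1; ring) pb ![1, 0, 1] (by simp) (by norm_num [Matrix.cons_val_two]) (by simp)
  · -- (3,4)
    refine master_nonsq s hs hrank _ (X 2)
      (X 0 * X 1 ^ 2 * (1 - X 1) * (X 0 - X 1 ^ 2 * X 2) * (X 1 ^ 2 * X 2 - X 0) * (X 1 * X 2 - X 0))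
      (by show epsFam K 3 * epsFam K 4 = _; rw [e3', e4', ← map_mul]; congr 1; ring) pc ![1, 2, 0] (by simp) (by norm_num [Matrix.cons_val_two]) (by simp)

end
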